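/- The identity ∑_{n=1}^∞ Γ((n+1)/2)/Γ(n) · z^{n-1} = 1 + (√π/2) z e^{z²/4}(1 + erf(z/2)) holds for all real z. -/

import Mathlib

open Real MeasureTheory Set Filter Topology Nat

/-- The error function erf(z) = (2/√π) ∫₀^z e^{-t²} dt. -/
noncomputable def erf (z : ℝ) : ℝ := 2 / Real.sqrt Real.pi * ∫ t in (0:ℝ)..z, Real.exp (-t ^ 2)

lemma exp_tsum (x : ℝ) : Real.exp x = ∑' n : ℕ, x ^ n / n ! := by
  rw [Real.exp_eq_exp_ℝ, NormedSpace.exp_eq_tsum_div]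

lemma hasDerivAt_erf (x : ℝ) :
    HasDerivAt erf (2 / Real.sqrt Real.pi * Real.exp (-x ^ 2)) x := by
  have hc : Continuous fun t : ℝ => Real.exp (-t ^ 2) := by continuity
  have h := (hc.integral_hasStrictDerivAt 0 x).hasDerivAt
  have := h.const_mul (2 / Real.sqrt Real.pi)
  exact this

lemma erf_neg (x : ℝ) : erf (-x) = - erf x := by
  have key : (∫ t in (0:ℝ)..(-x), Real.exp (-t ^ 2))
      = - ∫ t in (0:ℝ)..x, Real.exp (-t ^ 2) := by
    have h := intervalIntegral.integral_comp_neg (a := (0:ℝ)) (b := x)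
      (fun t => Real.exp (-t ^ 2))
    simp only [neg_neg, neg_zero, neg_sq] at h
    rw [intervalIntegral.integral_symm, ← h]
  unfold erf
  rw [key, mul_neg]

lemma erf_tendsto : Tendsto erf atTop (𝓝 1) := by
  have hi : IntegrableOn (fun t : ℝ => Real.exp (-t ^ 2)) (Ioi 0) := by
    have := integrable_exp_neg_mul_sq (b := (1:ℝ)) one_pos
    simpa using this.integrableOn
  have h2 : Tendsto (fun x : ℝ => ∫ t in (0:ℝ)..x, Real.exp (-t ^ 2)) atTop
      (𝓝 (∫ t in Ioi (0:ℝ), Real.exp (-t ^ 2))) :=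
    intervalIntegral_tendsto_integral_Ioi 0 hi tendsto_id
  have h3 : (∫ t in Ioi (0:ℝ), Real.exp (-t ^ 2)) = Real.sqrt π / 2 := by
    have := integral_gaussian_Ioi 1
    simpa using this
  rw [h3] at h2
  have hπ : Real.sqrt π ≠ 0 := ne_of_gt (Real.sqrt_pos.2 pi_pos)
  have := h2.const_mul (2 / Real.sqrt π)
  have heq : 2 / Real.sqrt π * (Real.sqrt π / 2) = 1 := by field_simp
  rw [heq] at this
  exact this.congr (fun x => rfl)

lemma gamma_int (n : ℕ) :
    ∫ s in Ioi (0:ℝ), s ^ (n + 1) * Real.exp (-s ^ 2)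
      = Real.Gamma (((n : ℝ) + 2) / 2) / 2 := by
  have hq : (-1 : ℝ) < (n : ℝ) + 1 := by
    have : (0:ℝ) ≤ n := n.cast_nonneg
    linarith
  have h := integral_rpow_mul_exp_neg_rpow (p := 2) (q := (n : ℝ) + 1) two_pos hq
  have hcast : ∀ x : ℝ, x ^ ((n : ℝ) + 1) = x ^ (n + 1 : ℕ) := by
    intro x
    rw [show ((n : ℝ) + 1) = ((n + 1 : ℕ) : ℝ) by push_cast; ring, Real.rpow_natCast]
  have hsq : ∀ x : ℝ, x ^ (2 : ℝ) = x ^ (2 : ℕ) := by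
    intro x
    rw [show (2 : ℝ) = ((2 : ℕ) : ℝ) by norm_num, Real.rpow_natCast]
  simp_rw [hcast, hsq] at h
  rw [h]
  rw [show ((n : ℝ) + 1 + 1) / 2 = ((n : ℝ) + 2) / 2 by ring]
  ring

lemma gamma_integrable (n : ℕ) :
    IntegrableOn (fun s : ℝ => s ^ (n + 1) * Real.exp (-s ^ 2)) (Ioi 0) := by
  have hq : (-1 : ℝ) < (n : ℝ) + 1 := by
    have : (0:ℝ) ≤ n := n.cast_nonneg
    linarith
  have h := integrable_rpow_mul_exp_neg_mul_sq (b := (1:ℝ)) one_pos hq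
  have heq : (fun x : ℝ => x ^ ((n : ℝ) + 1) * Real.exp (-1 * x ^ 2))
      = fun x : ℝ => x ^ (n + 1 : ℕ) * Real.exp (-x ^ 2) := by
    funext x
    rw [show ((n : ℝ) + 1) = ((n + 1 : ℕ) : ℝ) by push_cast; ring, Real.rpow_natCast,
      neg_one_mul]
  rw [heq] at h
  exact h.integrableOn

lemma gamma_half_le (m : ℕ) : Real.Gamma ((m : ℝ) + 3 / 2) ≤ 2 * (m + 1)! := by
  induction m with
  | zero =>
    have h1 : ((0 : ℕ) : ℝ) + 3 / 2 = 1 / 2 + 1 := by norm_num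
    rw [h1, Real.Gamma_add_one (by norm_num), Real.Gamma_one_half_eq]
    have h2 : Real.sqrt π ≤ 2 := by
      rw [show (2:ℝ) = Real.sqrt 4 by
        rw [show (4:ℝ) = 2 ^ 2 by norm_num, Real.sqrt_sq (by norm_num)]]
      exact Real.sqrt_le_sqrt (by linarith [Real.pi_le_four])
    simp only [Nat.factorial]
    nlinarith [Real.sqrt_nonneg π]
  | succ m ih =>
    have h1 : ((m + 1 : ℕ) : ℝ) + 3 / 2 = ((m : ℝ) + 3 / 2) + 1 := by push_cast; ring
    rw [h1, Real.Gamma_add_one (by positivity)]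
    have hpos : 0 < Real.Gamma ((m : ℝ) + 3 / 2) := Real.Gamma_pos_of_pos (by positivity)
    have hfac : ((m + 1 + 1)! : ℝ) = ((m : ℝ) + 2) * (m + 1)! := by
      rw [Nat.factorial_succ]
      push_cast
      ring
    rw [hfac]
    nlinarith [Nat.cast_nonneg (α := ℝ) (m + 1)!, hpos]

lemma summable_main (z : ℝ) :
    Summable (fun n : ℕ => Real.Gamma (((n : ℝ) + 2) / 2) / n ! * |z| ^ n) := by
  set f : ℕ → ℝ := fun n => Real.Gamma (((n : ℝ) + 2) / 2) / n ! * |z| ^ n with hf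
  have hnonneg : ∀ n, 0 ≤ f n := by
    intro n
    have : 0 < Real.Gamma (((n : ℝ) + 2) / 2) := Real.Gamma_pos_of_pos (by positivity)
    positivity
  have he : Summable fun m : ℕ => f (2 * m) := by
    refine Summable.of_nonneg_of_le (fun m => hnonneg _) (fun m => ?_)
      (Real.summable_pow_div_factorial (z ^ 2))
    have harg : (((2 * m : ℕ) : ℝ) + 2) / 2 = (m : ℝ) + 1 := by push_cast; ring
    rw [hf]
    simp only
    rw [harg, Real.Gamma_nat_eq_factorial, show |z| ^ (2 * m) = (z ^ 2) ^ m by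
      rw [pow_mul, sq_abs]]
    have hfact : ((m ! * m ! : ℕ) : ℝ) ≤ ((2 * m)! : ℝ) := by
      exact_mod_cast Nat.le_of_dvd (Nat.factorial_pos _)
        (by simpa [two_mul] using Nat.factorial_mul_factorial_dvd_factorial_add m m)
    have hw : (0:ℝ) ≤ (z ^ 2) ^ m := by positivity
    rw [div_mul_eq_mul_div, div_le_div_iff₀ (by positivity) (by positivity)]
    push_cast at hfact ⊢
    nlinarith [mul_nonneg hw (sub_nonneg.2 hfact)]
  have ho : Summable fun m : ℕ => f (2 * m + 1) := by
    refine Summable.of_nonneg_of_le (fun m => hnonneg _) (fun m => ?_)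
      ((Real.summable_pow_div_factorial (z ^ 2)).mul_left (2 * |z|))
    have harg : (((2 * m + 1 : ℕ) : ℝ) + 2) / 2 = (m : ℝ) + 3 / 2 := by push_cast; ring
    rw [hf]
    simp only
    rw [harg, show |z| ^ (2 * m + 1) = |z| * (z ^ 2) ^ m by
      rw [pow_succ, pow_mul, sq_abs]; ring]
    have h1 := gamma_half_le m
    have hfact : ((m ! * (m + 1)! : ℕ) : ℝ) ≤ ((2 * m + 1)! : ℝ) := by
      exact_mod_cast Nat.le_of_dvd (Nat.factorial_pos _)
        (by simpa [show m + (m + 1) = 2 * m + 1 by omega]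
          using Nat.factorial_mul_factorial_dvd_factorial_add m (m + 1))
    have hw : (0:ℝ) ≤ |z| * (z ^ 2) ^ m := by positivity
    have hstep : Real.Gamma ((m : ℝ) + 3 / 2) / ((2 * m + 1)! : ℝ) ≤ 2 / (m ! : ℝ) := by
      rw [div_le_div_iff₀ (by positivity) (by positivity)]
      calc Real.Gamma ((m : ℝ) + 3 / 2) * (m ! : ℝ) ≤ (2 * ((m + 1)! : ℝ)) * (m ! : ℝ) := by
            have := gamma_half_le m
            have : Real.Gamma ((m : ℝ) + 3 / 2) ≤ 2 * ((m + 1)! : ℝ) := by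
              exact_mod_cast gamma_half_le m
            nlinarith [Nat.cast_nonneg (α := ℝ) (m !)]
        _ ≤ 2 * ((2 * m + 1)! : ℝ) := by push_cast at hfact; nlinarith [hfact]
    calc Real.Gamma ((m : ℝ) + 3 / 2) / ((2 * m + 1)! : ℝ) * (|z| * (z ^ 2) ^ m)
        ≤ 2 / (m ! : ℝ) * (|z| * (z ^ 2) ^ m) := mul_le_mul_of_nonneg_right hstep hw
      _ = 2 * |z| * ((z ^ 2) ^ m / (m ! : ℝ)) := by ring
  exact (he.hasSum.even_add_odd ho.hasSum).summable

/-- ∑_{n≥1} Γ((n+1)/2)/Γ(n) · z^{n-1} = 1 + (√π/2) z e^{z²/4}(1 + erf(z/2)) for all real z.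
(The sum is reindexed by n ↦ n+1, so it runs over n = 1, 2, 3, ….) -/
theorem stmt3 (z : ℝ) :
    ∑' n : ℕ, Real.Gamma (((n : ℝ) + 2) / 2) / Real.Gamma ((n : ℝ) + 1) * z ^ n
      = 1 + Real.sqrt Real.pi / 2 * z * Real.exp (z ^ 2 / 4) * (1 + erf (z / 2)) := by
  have hπ : (0:ℝ) < Real.sqrt π := Real.sqrt_pos.2 pi_pos
  set c : ℝ := Real.sqrt π with hcdef
  set F : ℕ → ℝ → ℝ := fun n s => (2 * z ^ n / n !) * (s ^ (n + 1) * Real.exp (-s ^ 2))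
    with hF
  have hint : ∀ n, Integrable (F n) (volume.restrict (Ioi 0)) := fun n =>
    ((gamma_integrable n).const_mul _)
  have hnorm : ∀ n, (∫ s in Ioi (0:ℝ), ‖F n s‖)
      = Real.Gamma (((n : ℝ) + 2) / 2) / n ! * |z| ^ n := by
    intro n
    have heq : EqOn (fun s => ‖F n s‖)
        (fun s : ℝ => (2 * |z| ^ n / n !) * (s ^ (n + 1) * Real.exp (-s ^ 2))) (Ioi 0) := by
      intro s hs
      have hs0 : (0:ℝ) < s := hs
      simp only [hF, Real.norm_eq_abs, abs_mul, abs_div, abs_pow, abs_two, Nat.abs_cast,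
        Real.abs_exp, abs_of_pos hs0]
    rw [setIntegral_congr_fun measurableSet_Ioi heq, integral_const_mul, gamma_int n]
    ring
  have hsum : Summable (fun n => ∫ s in Ioi (0:ℝ), ‖F n s‖) :=
    (summable_main z).congr (fun n => (hnorm n).symm)
  have key := MeasureTheory.hasSum_integral_of_summable_integral_norm hint hsum
  have hL : ∀ n : ℕ, (∫ s in Ioi (0:ℝ), F n s)
      = Real.Gamma (((n : ℝ) + 2) / 2) / Real.Gamma ((n : ℝ) + 1) * z ^ n := by
    intro n
    rw [hF]
    simp only
    rw [integral_const_mul, gamma_int n, Real.Gamma_nat_eq_factorial]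
    ring
  have hpt : ∀ s : ℝ, (∑' n, F n s) = 2 * s * Real.exp (z * s - s ^ 2) := by
    intro s
    have h1 : ∀ n : ℕ, F n s = (2 * s * Real.exp (-s ^ 2)) * ((z * s) ^ n / n !) := by
      intro n
      rw [hF]
      simp only
      rw [mul_pow]
      ring
    rw [tsum_congr h1, tsum_mul_left, ← exp_tsum, mul_assoc, ← Real.exp_add,
      show -s ^ 2 + z * s = z * s - s ^ 2 by ring]
  -- integrability of the summed function
  have hcont2 : Continuous fun s : ℝ => 2 * s * Real.exp (z * s - s ^ 2) := by continuity
  have hmaj : Integrable (fun s : ℝ =>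
      (2 * Real.exp (z ^ 2)) * |s * Real.exp (-(3/4) * s ^ 2)|) := by
    have h := integrable_rpow_mul_exp_neg_mul_sq (b := (3/4:ℝ)) (by norm_num)
      (s := (1:ℝ)) (by norm_num)
    simp_rw [Real.rpow_one] at h
    exact h.abs.const_mul _
  have hintg : IntegrableOn (fun s : ℝ => 2 * s * Real.exp (z * s - s ^ 2)) (Ioi 0) := by
    refine Integrable.mono hmaj.integrableOn hcont2.aestronglyMeasurable.restrict ?_
    filter_upwards [ae_restrict_mem measurableSet_Ioi] with s hs
    have hs0 : (0:ℝ) < s := hs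
    rw [Real.norm_eq_abs, Real.norm_eq_abs,
      abs_of_nonneg (by positivity : (0:ℝ) ≤ 2 * s * Real.exp (z * s - s ^ 2)),
      abs_of_nonneg (by positivity :
        (0:ℝ) ≤ 2 * Real.exp (z ^ 2) * |s * Real.exp (-(3/4) * s ^ 2)|),
      abs_of_nonneg (by positivity : (0:ℝ) ≤ s * Real.exp (-(3/4) * s ^ 2))]
    have hexp : Real.exp (z * s - s ^ 2) ≤ Real.exp (z ^ 2) * Real.exp (-(3/4) * s ^ 2) := by
      rw [← Real.exp_add]
      apply Real.exp_le_exp.2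
      nlinarith [sq_nonneg (z - s / 2)]
    nlinarith [Real.exp_pos (z * s - s ^ 2), Real.exp_pos (-(3/4) * s ^ 2),
      Real.exp_pos (z ^ 2)]
  -- evaluate the integral via FTC
  have hI : (∫ s in Ioi (0:ℝ), 2 * s * Real.exp (z * s - s ^ 2))
      = 1 + c / 2 * z * Real.exp (z ^ 2 / 4) * (1 + erf (z / 2)) := by
    set C : ℝ := z * (c / 2) * Real.exp (z ^ 2 / 4) with hCdef
    set G : ℝ → ℝ := fun s => C * erf (s - z / 2) - Real.exp (z * s - s ^ 2) with hG
    have hderiv : ∀ s : ℝ, HasDerivAt G (2 * s * Real.exp (z * s - s ^ 2)) s := by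
      intro s
      have h1 : HasDerivAt (fun s : ℝ => erf (s - z / 2))
          (2 / c * Real.exp (-(s - z / 2) ^ 2)) s := by
        have := (hasDerivAt_erf (s - z / 2)).comp s ((hasDerivAt_id s).sub_const (z / 2))
        simp only [mul_one] at this
        exact this
      have hs : HasDerivAt (fun s : ℝ => z * s - s ^ 2) (z - 2 * s) s := by
        have hp : HasDerivAt (fun s : ℝ => s ^ 2) (2 * s) s := by
          simpa using hasDerivAt_pow 2 s
        have := ((hasDerivAt_id s).const_mul z).sub hp
        simp at this
        exact this
      have h2 : HasDerivAt (fun s : ℝ => Real.exp (z * s - s ^ 2))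
          ((z - 2 * s) * Real.exp (z * s - s ^ 2)) s := by
        have := hs.exp
        simpa [mul_comm] using this
      have h3 := (h1.const_mul C).sub h2
      refine h3.congr_deriv ?_
      have hee : Real.exp (z ^ 2 / 4) * Real.exp (-(s - z / 2) ^ 2)
          = Real.exp (z * s - s ^ 2) := by
        rw [← Real.exp_add]; congr 1; ring
      have hcc : c / 2 * (2 / c) = 1 := by field_simp
      have hC2 : C * (2 / c * Real.exp (-(s - z / 2) ^ 2)) = z * Real.exp (z * s - s ^ 2) := by
        calc C * (2 / c * Real.exp (-(s - z / 2) ^ 2))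
            = z * (c / 2 * (2 / c)) * (Real.exp (z ^ 2 / 4) * Real.exp (-(s - z / 2) ^ 2)) := by
              rw [hCdef]; ring
          _ = z * Real.exp (z * s - s ^ 2) := by rw [hcc, hee]; ring
      rw [hC2]
      ring
    have hcont0 : ContinuousWithinAt G (Ici 0) 0 :=
      (hderiv 0).continuousAt.continuousWithinAt
    have hlim : Tendsto G atTop (𝓝 C) := by
      have t0 : Tendsto (fun s : ℝ => s - z / 2) atTop atTop :=
        tendsto_atTop_add_const_right atTop (-(z / 2)) tendsto_id
      have t1 : Tendsto (fun s : ℝ => erf (s - z / 2)) atTop (𝓝 1) := by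
        have := erf_tendsto.comp t0
        exact this
      have t2 : Tendsto (fun s : ℝ => Real.exp (z * s - s ^ 2)) atTop (𝓝 0) := by
        have harg : Tendsto (fun s : ℝ => z * s - s ^ 2) atTop atBot := by
          have hsq : Tendsto (fun s : ℝ => (s - z / 2) ^ 2) atTop atTop :=
            (tendsto_pow_atTop (two_ne_zero)).comp t0
          have : Tendsto (fun s : ℝ => -(s - z / 2) ^ 2 + z ^ 2 / 4) atTop atBot :=
            tendsto_atBot_add_const_right _ _ (tendsto_neg_atBot_iff.2 hsq)
          refine this.congr (fun s => by ring)
        exact Real.tendsto_exp_atBot.comp harg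
      have := (t1.const_mul C).sub t2
      simpa using this
    have hFTC := MeasureTheory.integral_Ioi_of_hasDerivAt_of_tendsto hcont0
      (fun x _ => hderiv x) hintg hlim
    rw [hFTC]
    have hG0 : G 0 = C * erf (-(z / 2)) - 1 := by
      simp [hG]
    rw [hG0, erf_neg]
    rw [hCdef]
    ring
  calc ∑' n : ℕ, Real.Gamma (((n : ℝ) + 2) / 2) / Real.Gamma ((n : ℝ) + 1) * z ^ n
      = ∑' n : ℕ, ∫ s in Ioi (0:ℝ), F n s := tsum_congr (fun n => (hL n).symm)
    _ = ∫ s in Ioi (0:ℝ), ∑' n, F n s := key.tsum_eq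
    _ = ∫ s in Ioi (0:ℝ), 2 * s * Real.exp (z * s - s ^ 2) := by simp_rw [hpt]
    _ = 1 + c / 2 * z * Real.exp (z ^ 2 / 4) * (1 + erf (z / 2)) := hI
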